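/- arXiv:1203.1152 — 6 statements merged into one kernel-verified Lean document; each statement's English description precedes it below -/
import Mathlib

section
/- Let η : ℝ × ℝ → ℝ be defined by η(x,y) = (x - y) + (x - y)². Then η satisfies η(x,y) = (x-y) + o(|x-y|) as x - y → 0, but η does not satisfy the first relation of Condition C: specifically, for x = 0, y = 2, λ = 1 one has η(y, y + λ·η(x,y)) ≠ -λ·η(x,y). -/
open Asymptotics

/-- η(x,y) = (x-y) + (x-y)² satisfies η(x,y) = (x-y) + o(x-y) as x - y → 0,
but fails the first relation of Condition C at x = 0, y = 2, λ = 1. -/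
theorem remark_2_3_is_false :
    ∃ η : ℝ → ℝ → ℝ, (∀ x y : ℝ, η x y = (x - y) + (x - y) ^ 2) ∧
      (∀ y : ℝ, (fun d : ℝ => η (y + d) y - d) =o[nhds 0] (fun d : ℝ => d)) ∧
      η 2 (2 + (1 : ℝ) * η 0 2) ≠ -(1 : ℝ) * η 0 2 := by
  refine ⟨fun x y => (x - y) + (x - y) ^ 2, fun x y => rfl, ?_, by norm_num⟩
  intro y
  have h : (fun d : ℝ => (y + d - y) + (y + d - y) ^ 2 - d) = fun d : ℝ => d * d := by
    funext d; ring
  rw [h]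
  have h1 : (fun d : ℝ => d) =o[nhds 0] (fun _ : ℝ => (1 : ℝ)) := by
    exact isLittleO_id_one
  simpa using h1.mul_isBigO (isBigO_refl (fun d : ℝ => d) (nhds 0))
end

section
/- Define η : ℝ × ℝ → ℝ by η(x,y) = x - y if x·y ≥ 0, η(x,y) = 2 - y if x < 0 and y > 0, and η(x,y) = -2 - y if x > 0 and y < 0. Then η satisfies Condition C: for all x, y ∈ ℝ and all λ ∈ [0,1], η(y, y + λη(x,y)) = -λη(x,y) and η(x, y + λη(x,y)) = (1-λ)η(x,y). -/
/-- The corrected η from Example 2.1 of Ref. 5 satisfies Condition C. -/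
theorem corrected_eta_satisfies_condition_C (η : ℝ → ℝ → ℝ)
    (hη : ∀ x y : ℝ, η x y =
      if 0 ≤ x * y then x - y
      else if x < 0 then 2 - y else -2 - y) :
    ∀ x y : ℝ, ∀ lam : ℝ, lam ∈ Set.Icc (0 : ℝ) 1 →
      η y (y + lam * η x y) = -lam * η x y ∧
      η x (y + lam * η x y) = (1 - lam) * η x y := by
  intro x y lam hlam
  obtain ⟨h0, h1⟩ := hlam
  have h1' : (0:ℝ) ≤ 1 - lam := by linarith
  by_cases hxy : 0 ≤ x * y
  · have he : η x y = x - y := by rw [hη]; simp [hxy]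
    rw [he]
    have hy : 0 ≤ y * (y + lam * (x - y)) := by
      nlinarith [mul_nonneg h1' (sq_nonneg y), mul_nonneg h0 hxy]
    have hx : 0 ≤ x * (y + lam * (x - y)) := by
      nlinarith [mul_nonneg h1' hxy, mul_nonneg h0 (sq_nonneg x)]
    refine ⟨?_, ?_⟩ <;> rw [hη]
    · rw [if_pos hy]; ring
    · rw [if_pos hx]; ring
  · push_neg at hxy
    by_cases hx : x < 0
    · have hy : 0 < y := by nlinarith
      have he : η x y = 2 - y := by rw [hη]; simp [not_le.mpr hxy, hx]
      rw [he]
      have hz : 0 < y + lam * (2 - y) := by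
        rcases eq_or_lt_of_le h0 with h | h
        · nlinarith
        · nlinarith [mul_nonneg h1' hy.le]
      refine ⟨?_, ?_⟩ <;> rw [hη]
      · rw [if_pos (le_of_lt (mul_pos hy hz))]; ring
      · rw [if_neg (not_le.mpr (mul_neg_of_neg_of_pos hx hz)), if_pos hx]; ring
    · push_neg at hx
      have hxpos : 0 < x := hx.lt_of_ne fun h => by rw [← h] at hxy; simp at hxy
      have hy : y < 0 := by nlinarith
      have he : η x y = -2 - y := by
        rw [hη]; simp [not_le.mpr hxy, not_lt.mpr hx]
      rw [he]
      have hz : y + lam * (-2 - y) < 0 := by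
        rcases eq_or_lt_of_le h0 with h | h
        · nlinarith
        · nlinarith [mul_nonneg h1' (neg_nonneg.mpr hy.le)]
      refine ⟨?_, ?_⟩ <;> rw [hη]
      · rw [if_pos (le_of_lt (mul_pos_of_neg_of_neg hy hz))]; ring
      · rw [if_neg (not_le.mpr (mul_neg_of_pos_of_neg hxpos hz)),
          if_neg (not_lt.mpr hx)]; ring
end

section
/- Let η : ℝⁿ × ℝⁿ → ℝⁿ satisfy Condition C. For x, y ∈ ℝⁿ and λ₁, λ₂ ∈ [0,1] with λ₂ ≤ λ₁, if η(x,y) = 0 or λ₂ = 0, then η(y + λ₁•η(x,y), y + λ₂•η(x,y)) = (λ₁ - λ₂)•η(x,y). -/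
/-- Under Condition C, the two-parameter identity of Theorem 3.1 of Ref. 4
holds in the cases where its proof is valid: η(x,y) = 0 or λ₂ = 0. -/
theorem conditionC_two_lambda_special_cases (n : ℕ)
    (η : EuclideanSpace ℝ (Fin n) → EuclideanSpace ℝ (Fin n) → EuclideanSpace ℝ (Fin n))
    (hC : ∀ x y, ∀ lam : ℝ, lam ∈ Set.Icc (0 : ℝ) 1 →
      η y (y + lam • η x y) = -lam • η x y ∧
      η x (y + lam • η x y) = (1 - lam) • η x y)
    (x y : EuclideanSpace ℝ (Fin n)) (lam₁ lam₂ : ℝ)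
    (h₁ : lam₁ ∈ Set.Icc (0 : ℝ) 1) (h₂ : lam₂ ∈ Set.Icc (0 : ℝ) 1)
    (hle : lam₂ ≤ lam₁) (hcase : η x y = 0 ∨ lam₂ = 0) :
    η (y + lam₁ • η x y) (y + lam₂ • η x y) = (lam₁ - lam₂) • η x y := by
  rcases hcase with he | hl2
  · have h0 := (hC x y 0 ⟨le_refl 0, zero_le_one⟩).1
    simp at h0
    simp [he, h0]
  · subst hl2
    have h1 := (hC x y lam₁ h₁).1
    have h2 := (hC y (y + lam₁ • η x y) 1 ⟨zero_le_one, le_refl 1⟩).1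
    rw [h1] at h2
    simp only [one_smul, neg_smul, neg_neg] at h2
    have : y + lam₁ • η x y + -(lam₁ • η x y) = y := by abel
    rw [this] at h2
    simpa using h2
end

section
/- Let f : ℝ → ℝ be f(x) = x²/2, r = 0, b(x,u) = 1, and η(x,u) = u⁻¹(x² - u²) + sgn(u) for u ≠ 0, η(x,u) = 0 for u = 0. Then every stationary point of f is a global minimum, but f is not B-(0,r)-invex with respect to η and b, i.e., the inequality b(x,u)·(f(x) - f(u)) ≥ f'(u)·η(x,u) fails for some x, u ∈ ℝ. -/
/-- For f(x) = x²/2, b ≡ 1, r = 0 and the particular η, every stationary point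
of f is a global minimum but f is not B-(0,r)-invex w.r.t. η and b. -/
theorem not_B_zero_r_invex (f : ℝ → ℝ) (b : ℝ → ℝ → ℝ) (η : ℝ → ℝ → ℝ)
    (hf : ∀ x : ℝ, f x = x ^ 2 / 2) (hb : ∀ x u : ℝ, b x u = 1)
    (hη : ∀ x u : ℝ, u ≠ 0 → η x u = u⁻¹ * (x ^ 2 - u ^ 2) + Real.sign u)
    (hη0 : ∀ x : ℝ, η x 0 = 0) :
    (∀ u : ℝ, deriv f u = 0 → ∀ x : ℝ, f u ≤ f x) ∧
    ¬ (∀ x u : ℝ, b x u * (f x - f u) ≥ deriv f u * η x u) := by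
  have hfe : f = fun x : ℝ => x ^ 2 / 2 := funext hf
  have hderiv : ∀ u : ℝ, deriv f u = u := by
    intro u
    rw [hfe]
    have : HasDerivAt (fun x : ℝ => x ^ 2 / 2) u u := by
      have h := (hasDerivAt_pow 2 u).div_const 2
      simpa using h
    exact this.deriv
  constructor
  · intro u hu x
    rw [hderiv] at hu
    subst hu
    rw [hf, hf]
    norm_num
    positivity
  · intro h
    have h1 := h 1 1
    rw [hb, hderiv, hη 1 1 one_ne_zero] at h1
    simp [Real.sign_one] at h1
    linarith
end

section
/- Let K ⊆ ℝⁿ be invex with respect to η (i.e., u + λ•η(x,u) ∈ K for all x, u ∈ K, λ ∈ [0,1]), and let f : ℝⁿ → ℝ be differentiable. If f is preinvex with respect to η on K, i.e., f(u + λ•η(x,u)) ≤ λ·f(x) + (1-λ)·f(u) for all x, u ∈ K and λ ∈ [0,1], then f is invex with respect to η on K: f(x) - f(u) ≥ ⟨∇f(u), η(x,u)⟩ for all x, u ∈ K. -/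
open RealInnerProductSpace

/-- Pini's result: a differentiable preinvex function on an invex set is invex
with respect to the same η. -/
theorem preinvex_implies_invex (n : ℕ) (K : Set (EuclideanSpace ℝ (Fin n)))
    (η : EuclideanSpace ℝ (Fin n) → EuclideanSpace ℝ (Fin n) → EuclideanSpace ℝ (Fin n))
    (hK : ∀ x ∈ K, ∀ u ∈ K, ∀ lam : ℝ, lam ∈ Set.Icc (0 : ℝ) 1 →
      u + lam • η x u ∈ K)
    (f : EuclideanSpace ℝ (Fin n) → ℝ) (hf : Differentiable ℝ f)
    (hpre : ∀ x ∈ K, ∀ u ∈ K, ∀ lam : ℝ, lam ∈ Set.Icc (0 : ℝ) 1 →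
      f (u + lam • η x u) ≤ lam * f x + (1 - lam) * f u) :
    ∀ x ∈ K, ∀ u ∈ K, f x - f u ≥ ⟪gradient f u, η x u⟫ := by
  intro x hx u hu
  set v := η x u with hv
  set g : ℝ → ℝ := fun t => f (u + t • v) with hg
  have hcurve : ∀ t : ℝ, HasDerivAt (fun s : ℝ => u + s • v) v t := by
    intro t
    simpa using ((hasDerivAt_id t).smul_const v).const_add u
  have hgd : HasDerivAt g ⟪gradient f u, v⟫ 0 := by
    have h1 : HasFDerivAt f (fderiv ℝ f u) u := (hf u).hasFDerivAt
    have h1' : HasFDerivAt f (fderiv ℝ f u) (u + (0:ℝ) • v) := by simpa using h1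
    have h2 := h1'.comp_hasDerivAt 0 (hcurve 0)
    have h3 : fderiv ℝ f u v = ⟪gradient f u, v⟫ := by
      have := (hf u).hasGradientAt
      rw [hasGradientAt_iff_hasFDerivAt] at this
      have h4 : (fderiv ℝ f u : _) = (InnerProductSpace.toDual ℝ _) (gradient f u) :=
        this.fderiv.symm ▸ rfl
      rw [h4]; rfl
    rw [← h3]
    exact h2
  have hslope : ∀ t ∈ Set.Ioc (0:ℝ) 1, slope g 0 t ≤ f x - f u := by
    intro t ht
    have h := hpre x hx u hu t ⟨le_of_lt ht.1, ht.2⟩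
    have hg0 : g 0 = f u := by simp [g]
    have : (g t - g 0) / t ≤ f x - f u := by
      rw [div_le_iff₀ ht.1, hg0]
      nlinarith [h]
    simpa [slope, hg0, sub_zero, inv_mul_eq_div] using this
  have htend : Filter.Tendsto (slope g 0) (nhdsWithin 0 (Set.Ioi 0)) (nhds ⟪gradient f u, v⟫) :=
    (hasDerivAt_iff_tendsto_slope.mp hgd).mono_left
      (nhdsWithin_mono 0 (fun t ht => ne_of_gt ht))
  have : ⟪gradient f u, v⟫ ≤ f x - f u := by
    refine le_of_tendsto htend ?_
    filter_upwards [Ioc_mem_nhdsGT_of_mem ⟨le_refl (0:ℝ), one_pos⟩] with t ht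
    exact hslope t ht
  linarith [this]
end

section
/- Let K be a nonempty set, α : K × K → ℝ, and η : K × K → ℝⁿ with K ⊆ ℝⁿ. If α satisfies α(u, u + t·α(v,u)•η(v,u)) = t·α(v,u) for all u, v ∈ K and all t ∈ [0,1], then α(u,u) = 0 for every u ∈ K. Consequently, there exists no α : K × K → ℝ \ {0} satisfying this condition; the hypotheses of Theorems 6.1–6.4 of Ref. 8 are never satisfiable. -/
/-- The condition of Theorems 6.1–6.4 of Ref. 8 forces α(u,u) = 0 on K, so no
nowhere-zero α can satisfy it: those theorems are vacuous. -/
theorem ref8_condition_forces_alpha_diag_zero (n : ℕ)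
    (K : Set (EuclideanSpace ℝ (Fin n))) (hK : K.Nonempty)
    (α : EuclideanSpace ℝ (Fin n) → EuclideanSpace ℝ (Fin n) → ℝ)
    (η : EuclideanSpace ℝ (Fin n) → EuclideanSpace ℝ (Fin n) → EuclideanSpace ℝ (Fin n))
    (hcond : ∀ u ∈ K, ∀ v ∈ K, ∀ t : ℝ, t ∈ Set.Icc (0 : ℝ) 1 →
      α u (u + (t * α v u) • η v u) = t * α v u) :
    (∀ u ∈ K, α u u = 0) ∧ ¬ (∀ u ∈ K, ∀ v ∈ K, α u v ≠ 0) := by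
  have key : ∀ u ∈ K, α u u = 0 := by
    intro u hu
    have h := hcond u hu u hu 0 ⟨le_refl 0, zero_le_one⟩
    simpa using h
  refine ⟨key, fun h => ?_⟩
  obtain ⟨u, hu⟩ := hK
  exact h u hu u hu (key u hu)
end
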